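/- A unipotent element γ of SL_{n+1}(R) that preserves a properly convex open subset of P^n has odd degree, where the degree is the least k with (γ − 1)ᵏ = 0. -/

import Mathlib

open Filter Finset Topology Matrix
open Filter Finset Topology Matrix

private lemma tendsto_two_mul' : Filter.Tendsto (fun m : ℕ => 2 * m) atTop atTop :=
  tendsto_atTop_mono (f := id) (fun m => (by simp; omega : id m ≤ 2 * m)) tendsto_id

private lemma coef_lt (r j : ℕ) (hj : j < r) :
    Tendsto (fun p : ℕ => (p.choose j : ℝ) / (p : ℝ) ^ r) atTop (𝓝 0) := by
  have hub : Tendsto (fun p : ℕ => ((p : ℝ) ^ (r - j))⁻¹) atTop (𝓝 0) := by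
    apply Filter.Tendsto.inv_tendsto_atTop
    exact (tendsto_pow_atTop (by omega : r - j ≠ 0)).comp tendsto_natCast_atTop_atTop
  refine tendsto_of_tendsto_of_tendsto_of_le_of_le' tendsto_const_nhds hub ?_ ?_
  · filter_upwards with p
    positivity
  · filter_upwards [eventually_ge_atTop 1] with p hp
    have hp0 : (0:ℝ) < (p:ℝ) := by exact_mod_cast hp
    rw [div_le_iff₀ (by positivity), ← one_div, div_mul_eq_mul_div, le_div_iff₀ (by positivity),
      one_mul]
    calc (p.choose j : ℝ) * (p:ℝ)^(r-j) ≤ (p:ℝ)^j * (p:ℝ)^(r-j) := by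
          gcongr
          exact_mod_cast Nat.choose_le_pow p j
      _ = (p:ℝ) ^ (j + (r - j)) := by rw [pow_add]
      _ = (p:ℝ) ^ r := by congr 1; omega

private lemma coef_eq (r : ℕ) :
    Tendsto (fun p : ℕ => (p.choose r : ℝ) / (p : ℝ) ^ r) atTop
      (𝓝 ((1:ℝ) / r.factorial)) := by
  have main : Tendsto (fun p : ℕ => ((1:ℝ)/r.factorial) *
      ∏ i ∈ range r, (((p:ℝ) - i) / (p:ℝ))) atTop (𝓝 (((1:ℝ)/r.factorial) * ∏ _i ∈ range r, 1)) := by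
    apply Filter.Tendsto.const_mul
    apply tendsto_finset_prod
    intro i _
    have h1 : Tendsto (fun p : ℕ => 1 - (i:ℝ)/(p:ℝ)) atTop (𝓝 (1 - 0)) :=
      tendsto_const_nhds.sub (tendsto_const_div_atTop_nhds_zero_nat (i:ℝ))
    rw [sub_zero] at h1
    apply h1.congr'
    filter_upwards [eventually_ge_atTop 1] with p hp
    have hp0 : (p:ℝ) ≠ 0 := Nat.cast_ne_zero.mpr (by omega)
    rw [sub_div, div_self hp0]
  rw [prod_const_one, mul_one] at main
  apply main.congr'
  filter_upwards [eventually_ge_atTop (r+1)] with p hp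
  have hp0 : (0:ℝ) < (p:ℝ) := by exact_mod_cast (by omega : 0 < p)
  have hdesc : (r.factorial : ℝ) * (p.choose r : ℝ) = ∏ i ∈ range r, ((p:ℝ) - i) := by
    have h1 : (r.factorial * p.choose r : ℕ) = ∏ i ∈ range r, (p - i : ℕ) := by
      rw [← Nat.descFactorial_eq_factorial_mul_choose, Nat.descFactorial_eq_prod_range]
    have h2 := congrArg (fun x : ℕ => (x : ℝ)) h1
    push_cast at h2
    rw [h2]
    apply Finset.prod_congr rfl
    intro i hi
    rw [Nat.cast_sub (by simp at hi; omega)]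
  rw [prod_div_distrib, prod_const, card_range, ← hdesc]
  field_simp


open Filter Finset Topology Matrix

private lemma sum_mulVec'' {m' : Type*} [Fintype m'] {ι : Type*} (s : Finset ι)
    (A : ι → Matrix m' m' ℝ) (v : m' → ℝ) :
    (∑ j ∈ s, A j) *ᵥ v = ∑ j ∈ s, (A j *ᵥ v) := by
  induction s using Finset.cons_induction with
  | empty => simp [Matrix.zero_mulVec]
  | cons a s ha ih => rw [Finset.sum_cons, Finset.sum_cons, Matrix.add_mulVec, ih]

private lemma aux_pow_eq_sum {R : Type*} [Ring R] [Algebra ℝ R] (x : R) (r p : ℕ)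
    (hx : (x - 1) ^ (r + 1) = 0) (hp : r ≤ p) :
    x ^ p = ∑ j ∈ range (r + 1), (p.choose j : ℝ) • (x - 1) ^ j := by
  have h := (Commute.one_right (x - 1)).add_pow p
  rw [sub_add_cancel] at h
  rw [h, ← Finset.sum_subset (Finset.range_subset_range.mpr (by omega) : range (r+1) ⊆ range (p+1))]
  · apply Finset.sum_congr rfl
    intro j _
    rw [one_pow, mul_one, ← (Nat.cast_commute (p.choose j) ((x-1)^j)).eq, ← nsmul_eq_mul,
      ← Nat.cast_smul_eq_nsmul ℝ]
  · intro j hj hj2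
    have hjr : r + 1 ≤ j := by
      simp only [mem_range] at hj hj2; omega
    have hz : (x-1)^j = 0 := by
      calc (x-1)^j = (x-1)^(r+1) * (x-1)^(j - (r+1)) := by rw [← pow_add]; congr 1; omega
        _ = 0 := by rw [hx, zero_mul]
    simp [hz]



/-- An open proper convex cone in `ℝ^n`: the cone over a properly convex open subset of
projective space.  "Proper" is expressed by the existence of a linear form positive on the
closure of the cone away from the origin (equivalently, the closure of the projectivized
convex set avoids a projective hyperplane). -/
def IsProperConvexCone {n : ℕ} (C : Set (Fin n → ℝ)) : Prop :=
  IsOpen C ∧ Convex ℝ C ∧ C.Nonempty ∧ (∀ c : ℝ, 0 < c → ∀ v ∈ C, c • v ∈ C) ∧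
    ∃ f : (Fin n → ℝ) →ₗ[ℝ] ℝ, ∀ v ∈ closure C, v ≠ 0 → 0 < f v

/-- The matrix `g` preserves a properly convex open subset of `P^{n-1}`, i.e. it preserves
the union `C ∪ -C` for some open proper convex cone `C` of `ℝ^n`. -/
def PreservesPCO {n : ℕ} (g : Matrix (Fin n) (Fin n) ℝ) : Prop :=
  ∃ C : Set (Fin n → ℝ), IsProperConvexCone C ∧
    (g.mulVec '' C = C ∨ g.mulVec '' C = Neg.neg '' C)

/-- A unipotent element of `SL_{n+1}(ℝ)` preserving a properly convex open subset of `P^n`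
has odd degree, the degree being the least `k` with `(γ - 1)^k = 0`. -/
theorem odd_degree_of_unipotent_preserving_convex (n : ℕ)
    (γ : Matrix (Fin (n+1)) (Fin (n+1)) ℝ) (hdet : γ.det = 1)
    (hunip : (γ - 1) ^ (n+1) = 0) (hpres : PreservesPCO γ)
    (k : ℕ) (hk : IsLeast {j : ℕ | (γ - 1) ^ j = 0} k) : Odd k := by
  obtain ⟨C, ⟨hopen, hconv, hne, hcone, f, hf⟩, hγC⟩ := hpres
  by_contra hodd
  rw [Nat.not_odd_iff_even] at hodd
  have hk1 : k ≠ 0 := by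
    rintro rfl
    have h0 := hk.1
    simp only [Set.mem_setOf_eq, pow_zero] at h0
    exact one_ne_zero h0
  obtain ⟨r, rfl⟩ : ∃ r, k = r + 1 := ⟨k - 1, by omega⟩
  set N := γ - 1 with hN
  have hNk : N ^ (r+1) = 0 := hk.1
  have hNr : N ^ r ≠ 0 := fun h => by have := hk.2 h; omega
  have hrodd : Odd r :=
    Nat.not_even_iff_odd.mp (Nat.even_add_one.mp hodd)
  -- the inverse of γ
  set δ : Matrix (Fin (n+1)) (Fin (n+1)) ℝ := ∑ i ∈ range (r+1), (-N)^i with hδdef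
  have hNN : (-N)^(r+1) = 0 := by rw [neg_pow, hNk, mul_zero]
  have hNγ : -N - 1 = -γ := by rw [hN]; abel
  have hδγ : δ * γ = 1 := by
    have h := geom_sum_mul (-N) (r+1)
    rw [hNN, zero_sub, hNγ, mul_neg, neg_inj] at h
    exact h
  have hγδ : γ * δ = 1 := by
    have h := mul_geom_sum (-N) (r+1)
    rw [hNN, zero_sub, hNγ, neg_mul, neg_inj] at h
    exact h
  have hcomm : Commute γ δ := by rw [Commute, SemiconjBy, hγδ, hδγ]
  have hNδcomm : Commute N δ :=
    Commute.sum_right _ _ _ fun i _ => ((Commute.refl N).neg_right).pow_right i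
  have hδ1 : δ - 1 = -(N * δ) := by
    have h1 : δ * γ = δ * N + δ := by
      rw [show γ = N + 1 by rw [hN]; abel, mul_add, mul_one]
    rw [hδγ] at h1
    calc δ - 1 = δ - (δ * N + δ) := by rw [← h1]
      _ = -(δ * N) := by abel
      _ = -(N * δ) := by rw [hNδcomm.eq]
  have hNrδ : ∀ j : ℕ, N^r * δ^j = N^r := by
    have h1 : N^r * δ = N^r := by
      have h2 : N^r * (δ - 1) = 0 := by
        rw [hδ1, mul_neg, ← mul_assoc, ← pow_succ, hNk, zero_mul, neg_zero]
      rw [mul_sub, mul_one] at h2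
      exact sub_eq_zero.mp h2
    intro j
    induction j with
    | zero => simp
    | succ j ih => rw [pow_succ, ← mul_assoc, ih, h1]
  have hδr : (δ - 1)^r = -(N^r) := by
    rw [hδ1, neg_pow, hNδcomm.mul_pow, hNrδ r, hrodd.neg_one_pow, neg_one_mul]
  have hδk : (δ - 1)^(r+1) = 0 := by
    rw [pow_succ, hδr, hδ1, neg_mul_neg, ← mul_assoc, ← pow_succ, hNk, zero_mul]
  -- image composition helpers
  have himg : ∀ (A B : Matrix (Fin (n+1)) (Fin (n+1)) ℝ) (S : Set (Fin (n+1) → ℝ)),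
      A.mulVec '' (B.mulVec '' S) = (A*B).mulVec '' S := by
    intro A B S
    rw [Set.image_image]
    exact Set.image_congr' (fun x => mulVec_mulVec x A B)
  have hid : (1 : Matrix (Fin (n+1)) (Fin (n+1)) ℝ).mulVec '' C = C := by
    rw [show (1 : Matrix (Fin (n+1)) (Fin (n+1)) ℝ).mulVec = id from funext fun x => one_mulVec x,
      Set.image_id]
  have hγ2 : (γ*γ).mulVec '' C = C := by
    rcases hγC with h | h
    · rw [← himg, h, h]
    · calc (γ*γ).mulVec '' C = γ.mulVec '' (γ.mulVec '' C) := (himg _ _ _).symm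
        _ = γ.mulVec '' (Neg.neg '' C) := by rw [h]
        _ = Neg.neg '' (γ.mulVec '' C) := by
            rw [Set.image_image, Set.image_image]
            exact Set.image_congr' (fun x => mulVec_neg x γ)
        _ = Neg.neg '' (Neg.neg '' C) := by rw [h]
        _ = C := by simp [Set.image_image]
  have hγpow : ∀ m : ℕ, ((γ*γ)^m).mulVec '' C = C := by
    intro m
    induction m with
    | zero => rw [pow_zero]; exact hid
    | succ m ih => rw [pow_succ, ← himg, hγ2, ih]
  have hδpow : ∀ m : ℕ, ((δ*δ)^m).mulVec '' C = C := by
    intro m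
    have hc : Commute (δ*δ) (γ*γ) :=
      Commute.mul_left (Commute.mul_right hcomm.symm hcomm.symm)
        (Commute.mul_right hcomm.symm hcomm.symm)
    have h1 : (δ*δ)^m * (γ*γ)^m = 1 := by
      rw [← hc.mul_pow, show (δ*δ)*(γ*γ) = δ * ((δ * γ) * γ) by noncomm_ring, hδγ, one_mul,
        hδγ, one_pow]
    calc ((δ*δ)^m).mulVec '' C = ((δ*δ)^m).mulVec '' (((γ*γ)^m).mulVec '' C) := by rw [hγpow m]
      _ = (((δ*δ)^m) * ((γ*γ)^m)).mulVec '' C := himg _ _ _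
      _ = C := by rw [h1]; exact hid
  -- find a good vector in C
  haveI : NeBot (𝓝[{x : ℝ | IsUnit x}] (0:ℝ)) := by
    rw [show {x : ℝ | IsUnit x} = {(0:ℝ)}ᶜ by ext x; simp [isUnit_iff_ne_zero]]
    exact Real.punctured_nhds_module_neBot _
  obtain ⟨v, hvC, hv⟩ : ∃ v ∈ C, (N^r) *ᵥ v ≠ 0 := by
    by_contra h
    push_neg at h
    have hsub : C ⊆ (LinearMap.ker (N^r).mulVecLin : Set (Fin (n+1) → ℝ)) := fun x hx => by
      simpa [LinearMap.mem_ker, Matrix.mulVecLin_apply] using h x hx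
    have hint : (interior ((LinearMap.ker (N^r).mulVecLin : Submodule ℝ (Fin (n+1) → ℝ)) :
        Set (Fin (n+1) → ℝ))).Nonempty := by
      obtain ⟨x, hx⟩ := hne
      exact ⟨x, interior_maximal hsub hopen hx⟩
    have htop := Submodule.eq_top_of_nonempty_interior' _ hint
    apply hNr
    have hz : ∀ x, (N^r) *ᵥ x = 0 := fun x => by
      have hx : x ∈ LinearMap.ker (N^r).mulVecLin := htop ▸ Submodule.mem_top
      simpa [Matrix.mulVecLin_apply] using hx
    ext i j
    have := congrFun (hz (Pi.single j 1)) i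
    simpa using this
  have hvmemγ : ∀ m : ℕ, (γ^(2*m)) *ᵥ v ∈ C := fun m => by
    rw [pow_mul, pow_two, ← hγpow m]
    exact Set.mem_image_of_mem _ hvC
  have hvmemδ : ∀ m : ℕ, (δ^(2*m)) *ᵥ v ∈ C := fun m => by
    rw [pow_mul, pow_two, ← hδpow m]
    exact Set.mem_image_of_mem _ hvC
  -- key limit lemma
  have key : ∀ A : Matrix (Fin (n+1)) (Fin (n+1)) ℝ, (A - 1)^(r+1) = 0 →
      (∀ m : ℕ, ((A ^ (2*m)) *ᵥ v) ∈ C) →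
      ((1:ℝ)/r.factorial) • (((A - 1)^r) *ᵥ v) ∈ closure C := by
    intro A hA hmem
    set u : ℕ → (Fin (n+1) → ℝ) := fun j => ((A - 1)^j) *ᵥ v with hu
    set g : ℕ → (Fin (n+1) → ℝ) :=
      fun m => ∑ j ∈ range (r+1), (((2*m).choose j : ℝ) / (((2*m : ℕ)) : ℝ)^r) • u j with hg
    have hgC : ∀ᶠ m in atTop, g m ∈ C := by
      filter_upwards [eventually_ge_atTop (r+1)] with m hm
      have h1 : r ≤ 2*m := by omega
      have h2 : (0:ℝ) < (((2*m : ℕ)) : ℝ) := by exact_mod_cast (by omega : 0 < 2*m)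
      have hexp : (A ^ (2*m)) *ᵥ v = ∑ j ∈ range (r+1), (((2*m).choose j : ℝ)) • u j := by
        rw [aux_pow_eq_sum A r (2*m) hA h1, sum_mulVec'']
        exact Finset.sum_congr rfl fun j _ => smul_mulVec _ _ _
      have heq : g m = ((1:ℝ)/(((2*m : ℕ)):ℝ)^r) • ((A ^ (2*m)) *ᵥ v) := by
        rw [hexp, Finset.smul_sum]
        refine Finset.sum_congr rfl fun j _ => ?_
        rw [smul_smul]
        congr 1
        ring
      rw [heq]
      exact hcone _ (by positivity) _ (hmem m)
    have hlim : Tendsto g atTop (𝓝 (((1:ℝ)/r.factorial) • u r)) := by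
      have heq : ((1:ℝ)/r.factorial) • u r
          = ∑ j ∈ range (r+1), (if j = r then ((1:ℝ)/r.factorial) else 0) • u j := by
        rw [Finset.sum_eq_single_of_mem r (self_mem_range_succ r)]
        · rw [if_pos rfl]
        · intro j _ hj
          rw [if_neg hj, zero_smul]
      rw [heq]
      apply tendsto_finset_sum
      intro j hj
      have hjr : j ≤ r := by simp only [mem_range] at hj; omega
      rcases eq_or_lt_of_le hjr with rfl | hlt
      · rw [if_pos rfl]
        exact Filter.Tendsto.smul_const ((coef_eq j).comp tendsto_two_mul') (u j)
      · rw [if_neg (by omega)]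
        have h0 := Filter.Tendsto.smul_const ((coef_lt r j hlt).comp tendsto_two_mul') (u j)
        rw [zero_smul] at h0
        rw [zero_smul]
        exact h0
    exact mem_closure_of_tendsto hlim hgC
  have h1 := key γ (by rw [← hN]; exact hNk) hvmemγ
  have h2 := key δ hδk hvmemδ
  rw [← hN] at h1
  rw [hδr, Matrix.neg_mulVec, smul_neg] at h2
  set w := ((1:ℝ)/r.factorial) • ((N^r) *ᵥ v) with hw
  have hwne : w ≠ 0 := smul_ne_zero (by positivity) hv
  have p1 := hf w h1 hwne
  have p2 := hf (-w) h2 (neg_ne_zero.mpr hwne)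
  rw [map_neg] at p2
  linarith
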